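/- Let f : ℝ^n → ℝ^m be continuously differentiable with Jacobian H(θ) ∈ ℝ^{m×n}, let y ∈ ℝ^m be a fixed target, and let θ₀ ∈ ℝ^n with G₀ = H(θ₀)H(θ₀)ᵀ positive definite. Suppose there exists a constant C with 0 ≤ C < 1/2 such that for all θ with ‖θ − θ₀‖₂ ≤ 3‖y − f(θ₀)‖₂ / √(λ_min(G₀)) one has ‖H(θ) − H(θ₀)‖₂ ≤ (C/3)√(λ_min(G₀)) (Stable Jacobian assumption). Fix ρ ≥ 0, fix an iterate θ_k with ‖θ_k − θ₀‖₂ ≤ 3‖y − f(θ₀)‖₂ / √(λ_min(G₀)), set H_k = H(θ_k), ŷ_k = f(θ_k), G_k = H_k H_kᵀ, assume G_k is positive definite, and define the gradient-regularized natural-gradient iterate θ_{k+1} = θ_k − H_kᵀ (G_k + ρ‖H_kᵀ(ŷ_k − y)‖₂² I)^{-1} (ŷ_k − y). If θ_{k+1} also satisfies ‖θ_{k+1} − θ₀‖₂ ≤ 3‖y − f(θ₀)‖₂ / √(λ_min(G₀)), then with ŷ_{k+1} = f(θ_{k+1}) and κ(G_k) = λ_max(G_k)/λ_min(G_k), the per-step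 error bound ‖ŷ_{k+1} − y‖₂ ≤ (1 + C) · ((2 + C)/(1 + C) + ρ κ(G_k) ‖ŷ_k − y‖₂²) · ‖ŷ_k − y‖₂ holds. -/

import Mathlib

open Matrix
open scoped Matrix.Norms.L2Operator RealInnerProductSpace

noncomputable def lamMin {m : ℕ} (A : Matrix (Fin m) (Fin m) ℝ) : ℝ :=
  if h : A.IsHermitian then ⨅ i, h.eigenvalues i else 0

noncomputable def lamMax {m : ℕ} (A : Matrix (Fin m) (Fin m) ℝ) : ℝ :=
  if h : A.IsHermitian then ⨆ i, h.eigenvalues i else 0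

section aux
variable {m n : ℕ}

lemma norm_toEuclideanLin_apply_le (A : Matrix (Fin m) (Fin n) ℝ) (x : EuclideanSpace ℝ (Fin n)) :
    ‖Matrix.toEuclideanLin A x‖ ≤ ‖A‖ * ‖x‖ :=
  A.l2_opNorm_mulVec x

lemma toEuclideanLin_mul_apply {p : ℕ} (A : Matrix (Fin m) (Fin n) ℝ)
    (B : Matrix (Fin n) (Fin p) ℝ) (x : EuclideanSpace ℝ (Fin p)) :
    Matrix.toEuclideanLin (A * B) x = Matrix.toEuclideanLin A (Matrix.toEuclideanLin B x) := by
  simp [Matrix.toEuclideanLin_apply, Matrix.mulVec_mulVec]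

lemma inner_toEuclideanLin_transpose (A : Matrix (Fin m) (Fin n) ℝ)
    (x : EuclideanSpace ℝ (Fin m)) (y : EuclideanSpace ℝ (Fin n)) :
    ⟪Matrix.toEuclideanLin Aᵀ x, y⟫ = ⟪x, Matrix.toEuclideanLin A y⟫ := by
  have : Aᵀ = Aᴴ := by ext i j; simp [Matrix.conjTranspose_apply]
  rw [this, Matrix.toEuclideanLin_conjTranspose_eq_adjoint]
  exact LinearMap.adjoint_inner_left _ _ _

end aux

section rayleigh
variable {m : ℕ} {A : Matrix (Fin m) (Fin m) ℝ}

lemma toEuclideanLin_eigenvectorBasis (hA : A.IsHermitian) (j : Fin m) :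
    Matrix.toEuclideanLin A (hA.eigenvectorBasis j) =
      hA.eigenvalues j • hA.eigenvectorBasis j := by
  have h1 := hA.mulVec_eigenvectorBasis j
  rw [Matrix.toEuclideanLin_apply]
  exact congrArg (WithLp.equiv 2 (Fin m → ℝ)).symm h1

lemma quad_eq_sum (hA : A.IsHermitian) (x : EuclideanSpace ℝ (Fin m)) :
    ⟪x, Matrix.toEuclideanLin A x⟫ =
      ∑ i, hA.eigenvalues i * ⟪hA.eigenvectorBasis i, x⟫ ^ 2 := by
  have hS : (Matrix.toEuclideanLin A).IsSymmetric :=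
    Matrix.isHermitian_iff_isSymmetric.mp hA
  rw [← OrthonormalBasis.sum_inner_mul_inner (hA.eigenvectorBasis) x
    (Matrix.toEuclideanLin A x)]
  refine Finset.sum_congr rfl fun i _ => ?_
  have : ⟪hA.eigenvectorBasis i, Matrix.toEuclideanLin A x⟫
      = hA.eigenvalues i * ⟪hA.eigenvectorBasis i, x⟫ := by
    rw [← hS (hA.eigenvectorBasis i) x, toEuclideanLin_eigenvectorBasis hA i,
      real_inner_smul_left]
  rw [this, real_inner_comm x]
  ring

lemma norm_sq_eq_sum_inner (hA : A.IsHermitian) (x : EuclideanSpace ℝ (Fin m)) :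
    ‖x‖ ^ 2 = ∑ i, ⟪hA.eigenvectorBasis i, x⟫ ^ 2 := by
  have := OrthonormalBasis.sum_inner_mul_inner (hA.eigenvectorBasis) x x
  rw [real_inner_self_eq_norm_sq] at this
  rw [← this]
  exact Finset.sum_congr rfl fun i _ => by rw [real_inner_comm x]; ring

lemma lamMin_mul_norm_sq_le (hm : 0 < m) (hA : A.IsHermitian) (x : EuclideanSpace ℝ (Fin m)) :
    lamMin A * ‖x‖ ^ 2 ≤ ⟪x, Matrix.toEuclideanLin A x⟫ := by
  haveI : Nonempty (Fin m) := Fin.pos_iff_nonempty.mp hm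
  rw [quad_eq_sum hA, norm_sq_eq_sum_inner hA, Finset.mul_sum, lamMin, dif_pos hA]
  refine Finset.sum_le_sum fun i _ => ?_
  exact mul_le_mul_of_nonneg_right (ciInf_le (Finite.bddBelow_range _) i) (sq_nonneg _)

lemma quad_le_lamMax_mul_norm_sq (hm : 0 < m) (hA : A.IsHermitian)
    (x : EuclideanSpace ℝ (Fin m)) :
    ⟪x, Matrix.toEuclideanLin A x⟫ ≤ lamMax A * ‖x‖ ^ 2 := by
  haveI : Nonempty (Fin m) := Fin.pos_iff_nonempty.mp hm
  rw [quad_eq_sum hA, norm_sq_eq_sum_inner hA, Finset.mul_sum, lamMax, dif_pos hA]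
  refine Finset.sum_le_sum fun i _ => ?_
  exact mul_le_mul_of_nonneg_right (le_ciSup (Finite.bddAbove_range _) i) (sq_nonneg _)

lemma exists_eigenvalue_lamMin (hm : 0 < m) (hA : A.IsHermitian) :
    ∃ i, hA.eigenvalues i = lamMin A := by
  haveI : Nonempty (Fin m) := Fin.pos_iff_nonempty.mp hm
  obtain ⟨i, _, hi⟩ := Finset.exists_min_image Finset.univ hA.eigenvalues ⟨Classical.arbitrary _, Finset.mem_univ _⟩
  refine ⟨i, le_antisymm ?_ ?_⟩
  · rw [lamMin, dif_pos hA]; exact le_ciInf fun j => hi j (Finset.mem_univ j)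
  · rw [lamMin, dif_pos hA]; exact ciInf_le (Finite.bddBelow_range _) i

lemma le_lamMin (hm : 0 < m) (hA : A.IsHermitian) {c : ℝ}
    (h : ∀ x : EuclideanSpace ℝ (Fin m), c * ‖x‖ ^ 2 ≤ ⟪x, Matrix.toEuclideanLin A x⟫) :
    c ≤ lamMin A := by
  obtain ⟨i, hi⟩ := exists_eigenvalue_lamMin hm hA
  have h1 := h (hA.eigenvectorBasis i)
  rw [toEuclideanLin_eigenvectorBasis hA i, real_inner_smul_right,
    real_inner_self_eq_norm_sq, hA.eigenvectorBasis.orthonormal.1 i] at h1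
  simpa [hi] using h1

lemma lamMin_pos (hm : 0 < m) (hA : A.PosDef) : 0 < lamMin A := by
  obtain ⟨i, hi⟩ := exists_eigenvalue_lamMin hm hA.isHermitian
  rw [← hi]; exact hA.eigenvalues_pos i

lemma lamMin_le_lamMax (hm : 0 < m) (hA : A.IsHermitian) : lamMin A ≤ lamMax A := by
  haveI : Nonempty (Fin m) := Fin.pos_iff_nonempty.mp hm
  rw [lamMin, lamMax, dif_pos hA, dif_pos hA]
  exact le_trans (ciInf_le (Finite.bddBelow_range _) (Classical.arbitrary _))
    (le_ciSup (Finite.bddAbove_range _) _)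
end rayleigh

section core
variable {m n : ℕ}

lemma l2_opNorm_transpose (A : Matrix (Fin m) (Fin n) ℝ) : ‖Aᵀ‖ = ‖A‖ := by
  have h : Aᵀ = Aᴴ := by ext i j; simp [Matrix.conjTranspose_apply]
  rw [h]; exact A.l2_opNorm_conjTranspose

lemma inner_gram (A : Matrix (Fin m) (Fin n) ℝ) (x : EuclideanSpace ℝ (Fin m)) :
    ⟪x, Matrix.toEuclideanLin (A * Aᵀ) x⟫ = ‖Matrix.toEuclideanLin Aᵀ x‖ ^ 2 := by
  rw [toEuclideanLin_mul_apply, ← inner_toEuclideanLin_transpose,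
    real_inner_self_eq_norm_sq]

lemma toEuclideanLin_one_apply (x : EuclideanSpace ℝ (Fin m)) :
    Matrix.toEuclideanLin (1 : Matrix (Fin m) (Fin m) ℝ) x = x := by
  simp [Matrix.toEuclideanLin_apply]

lemma lamMin_mul_norm_inv_le {M : Matrix (Fin m) (Fin m) ℝ} (hm : 0 < m)
    (hM : M.PosDef) (u : EuclideanSpace ℝ (Fin m)) :
    lamMin M * ‖Matrix.toEuclideanLin M⁻¹ u‖ ≤ ‖u‖ := by
  set v := Matrix.toEuclideanLin M⁻¹ u with hv
  have hMv : Matrix.toEuclideanLin M v = u := by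
    rw [hv, ← toEuclideanLin_mul_apply, Matrix.mul_nonsing_inv _ hM.det_pos.ne'.isUnit,
      toEuclideanLin_one_apply]
  have h1 : lamMin M * ‖v‖ ^ 2 ≤ ⟪v, Matrix.toEuclideanLin M v⟫ :=
    lamMin_mul_norm_sq_le hm hM.isHermitian v
  rw [hMv] at h1
  have h2 : ⟪v, u⟫ ≤ ‖v‖ * ‖u‖ := real_inner_le_norm v u
  rcases eq_or_lt_of_le (norm_nonneg v) with h | h
  · rw [← h]; simpa using norm_nonneg u
  · nlinarith [norm_nonneg u, lamMin_pos hm hM]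

end core

lemma sq_le_imp {a b : ℝ} (ha : 0 ≤ a) (hb : 0 ≤ b) (h : a ^ 2 ≤ b ^ 2) : a ≤ b := by
  nlinarith
set_option maxHeartbeats 2000000 in
theorem stmt_0 {n m : ℕ}
    (f : EuclideanSpace ℝ (Fin n) → EuclideanSpace ℝ (Fin m)) (hf : ContDiff ℝ 1 f)
    (H : EuclideanSpace ℝ (Fin n) → Matrix (Fin m) (Fin n) ℝ)
    (hH : ∀ θ, Matrix.toEuclideanLin (H θ) = (fderiv ℝ f θ).toLinearMap)
    (y : EuclideanSpace ℝ (Fin m)) (θ₀ : EuclideanSpace ℝ (Fin n))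
    (hG₀ : (H θ₀ * (H θ₀)ᵀ).PosDef)
    (C : ℝ) (hC0 : 0 ≤ C) (hC : C < 1 / 2)
    (hstable : ∀ θ : EuclideanSpace ℝ (Fin n),
      ‖θ - θ₀‖ ≤ 3 * ‖y - f θ₀‖ / Real.sqrt (lamMin (H θ₀ * (H θ₀)ᵀ)) →
      ‖H θ - H θ₀‖ ≤ C / 3 * Real.sqrt (lamMin (H θ₀ * (H θ₀)ᵀ)))
    (ρ : ℝ) (hρ : 0 ≤ ρ)
    (θk : EuclideanSpace ℝ (Fin n))
    (hθk : ‖θk - θ₀‖ ≤ 3 * ‖y - f θ₀‖ / Real.sqrt (lamMin (H θ₀ * (H θ₀)ᵀ)))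
    (hGk : (H θk * (H θk)ᵀ).PosDef)
    (θk1 : EuclideanSpace ℝ (Fin n))
    (hstep : θk1 = θk - Matrix.toEuclideanLin
        ((H θk)ᵀ * (H θk * (H θk)ᵀ +
          (ρ * ‖Matrix.toEuclideanLin (H θk)ᵀ (f θk - y)‖ ^ 2) •
            (1 : Matrix (Fin m) (Fin m) ℝ))⁻¹)
        (f θk - y))
    (hθk1 : ‖θk1 - θ₀‖ ≤ 3 * ‖y - f θ₀‖ / Real.sqrt (lamMin (H θ₀ * (H θ₀)ᵀ))) :
    ‖f θk1 - y‖ ≤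
      (1 + C) * ((2 + C) / (1 + C) +
        ρ * (lamMax (H θk * (H θk)ᵀ) / lamMin (H θk * (H θk)ᵀ)) * ‖f θk - y‖ ^ 2) *
      ‖f θk - y‖ := by
  rcases Nat.eq_zero_or_pos m with hm | hm
  · haveI : IsEmpty (Fin m) := by subst hm; infer_instance
    have h1 : f θk1 - y = 0 := Subsingleton.elim _ _
    have h2 : f θk - y = 0 := Subsingleton.elim _ _
    rw [h1, h2]; simp
  set lam0 := lamMin (H θ₀ * (H θ₀)ᵀ) with hlam0def
  have hlam0 : 0 < lam0 := lamMin_pos hm hG₀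
  set slam0 := Real.sqrt lam0 with hslam0def
  have hslam0 : 0 < slam0 := Real.sqrt_pos.mpr hlam0
  have hslam0sq : slam0 ^ 2 = lam0 := Real.sq_sqrt hlam0.le
  set G := H θk * (H θk)ᵀ with hGdef
  set s := ρ * ‖Matrix.toEuclideanLin (H θk)ᵀ (f θk - y)‖ ^ 2 with hsdef
  set M := G + s • (1 : Matrix (Fin m) (Fin m) ℝ) with hMdef
  set r := f θk - y with hrdef
  have hs0 : 0 ≤ s := by rw [hsdef]; positivity
  clear_value lam0 slam0 G s M r
  have hlamG : 0 < lamMin G := lamMin_pos hm hGk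
  have hlamGmax : 0 < lamMax G := lt_of_lt_of_le hlamG (lamMin_le_lamMax hm hGk.isHermitian)
  -- M is positive definite
  have hMpd : M.PosDef := by
    rw [hMdef]
    refine hGk.add_posSemidef ?_
    rw [Matrix.smul_one_eq_diagonal]
    exact Matrix.posSemidef_diagonal_iff.mpr fun _ => hs0
  have hMinv : M * M⁻¹ = 1 := Matrix.mul_nonsing_inv _ hMpd.det_pos.ne'.isUnit
  -- quadratic form of M
  have hquadM : ∀ x : EuclideanSpace ℝ (Fin m),
      ⟪x, Matrix.toEuclideanLin M x⟫ = ⟪x, Matrix.toEuclideanLin G x⟫ + s * ‖x‖ ^ 2 := by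
    intro x
    rw [hMdef, map_add, LinearMap.add_apply, inner_add_right, _root_.map_smul,
      LinearMap.smul_apply, toEuclideanLin_one_apply, real_inner_smul_right,
      real_inner_self_eq_norm_sq]
  have hlamM : lamMin G ≤ lamMin M := by
    refine le_lamMin hm hMpd.isHermitian fun x => ?_
    rw [hquadM x]
    nlinarith [lamMin_mul_norm_sq_le hm hGk.isHermitian x, sq_nonneg ‖x‖, norm_nonneg x]
  have hlamMpos : 0 < lamMin M := lt_of_lt_of_le hlamG hlamM
  -- the step vector
  set u := Matrix.toEuclideanLin M⁻¹ r with hudef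
  set Δ := θk1 - θk with hΔdef
  clear_value u Δ
  have hΔ : Δ = -(Matrix.toEuclideanLin (H θk)ᵀ u) := by
    rw [hΔdef, hstep, hudef, ← toEuclideanLin_mul_apply]; abel
  have hu : lamMin M * ‖u‖ ≤ ‖r‖ := by rw [hudef]; exact lamMin_mul_norm_inv_le hm hMpd r
  have hunorm : ‖u‖ ≤ ‖r‖ / lamMin M := by
    rw [le_div_iff₀ hlamMpos]; linarith [hu]
  -- ‖Δ‖² ≤ ‖r‖²/lammin(M)
  have hMu : Matrix.toEuclideanLin M u = r := by
    rw [hudef, ← toEuclideanLin_mul_apply, hMinv, toEuclideanLin_one_apply]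
  have hΔsq : lamMin M * ‖Δ‖ ^ 2 ≤ ‖r‖ ^ 2 := by
    have h1 : ‖Δ‖ ^ 2 = ⟪u, Matrix.toEuclideanLin G u⟫ := by
      rw [hΔ, norm_neg, hGdef, ← inner_gram]
    have h2 : ⟪u, Matrix.toEuclideanLin G u⟫ ≤ ⟪u, Matrix.toEuclideanLin M u⟫ := by
      rw [hquadM u]; nlinarith [sq_nonneg ‖u‖]
    have h3 : ⟪u, r⟫ ≤ ‖u‖ * ‖r‖ := real_inner_le_norm u r
    rw [hMu] at h2
    rw [h1]
    calc lamMin M * ⟪u, Matrix.toEuclideanLin G u⟫ ≤ lamMin M * (‖u‖ * ‖r‖) :=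
          mul_le_mul_of_nonneg_left (h2.trans h3) hlamMpos.le
      _ = (lamMin M * ‖u‖) * ‖r‖ := by ring
      _ ≤ ‖r‖ * ‖r‖ := mul_le_mul_of_nonneg_right hu (norm_nonneg r)
      _ = ‖r‖ ^ 2 := by ring
  -- lower bound on lamMin G
  have hb : 0 < (1 - C/3) * slam0 := by
    apply mul_pos _ hslam0; linarith
  have hlamGlow : ((1 - C/3) * slam0) ^ 2 ≤ lamMin G := by
    refine le_lamMin hm hGk.isHermitian fun x => ?_
    have hq : ⟪x, Matrix.toEuclideanLin G x⟫ = ‖Matrix.toEuclideanLin (H θk)ᵀ x‖ ^ 2 := by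
      rw [hGdef, inner_gram]
    set a := ‖Matrix.toEuclideanLin (H θ₀)ᵀ x‖ with hadef
    set b := ‖Matrix.toEuclideanLin (H θk)ᵀ x‖ with hbdef
    have ha0 : 0 ≤ a := norm_nonneg _
    have hb0 : 0 ≤ b := norm_nonneg _
    have h0 : slam0 * ‖x‖ ≤ a := by
      have hq0 : lam0 * ‖x‖ ^ 2 ≤ a ^ 2 := by
        have h9 := lamMin_mul_norm_sq_le hm hG₀.isHermitian x
        rw [inner_gram] at h9
        rw [hlam0def, hadef]; exact h9
      refine sq_le_imp (mul_nonneg hslam0.le (norm_nonneg x)) ha0 ?_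
      rw [mul_pow, hslam0sq]; exact hq0
    have hdiff : ‖Matrix.toEuclideanLin (H θ₀)ᵀ x - Matrix.toEuclideanLin (H θk)ᵀ x‖
        ≤ C/3 * slam0 * ‖x‖ := by
      have h1 : Matrix.toEuclideanLin (H θ₀)ᵀ x - Matrix.toEuclideanLin (H θk)ᵀ x
          = Matrix.toEuclideanLin (H θ₀ - H θk)ᵀ x := by
        rw [Matrix.transpose_sub, map_sub, LinearMap.sub_apply]
      rw [h1]
      calc ‖Matrix.toEuclideanLin (H θ₀ - H θk)ᵀ x‖ ≤ ‖(H θ₀ - H θk)ᵀ‖ * ‖x‖ :=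
            norm_toEuclideanLin_apply_le _ x
        _ ≤ C/3 * slam0 * ‖x‖ := by
            apply mul_le_mul_of_nonneg_right _ (norm_nonneg x)
            rw [l2_opNorm_transpose, norm_sub_rev]
            exact hstable θk hθk
    have htri := norm_sub_norm_le (Matrix.toEuclideanLin (H θ₀)ᵀ x)
      (Matrix.toEuclideanLin (H θk)ᵀ x)
    rw [← hadef, ← hbdef] at htri
    have hlow : (1 - C/3) * slam0 * ‖x‖ ≤ b := by nlinarith [htri.trans hdiff]
    rw [hq]
    nlinarith [mul_self_le_mul_self (mul_nonneg hb.le (norm_nonneg x)) hlow]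
  -- ‖Δ‖ ≤ ‖r‖ / ((1-C/3) slam0)
  have hΔnorm : (1 - C/3) * slam0 * ‖Δ‖ ≤ ‖r‖ := by
    nlinarith [norm_nonneg Δ, norm_nonneg r, hΔsq, hlamM, hlamGlow, hb,
      mul_nonneg hb.le (norm_nonneg Δ)]
  -- s bound
  have hsbound : s ≤ ρ * lamMax G * ‖r‖ ^ 2 := by
    rw [hsdef]
    have h1 : ‖Matrix.toEuclideanLin (H θk)ᵀ r‖ ^ 2 ≤ lamMax G * ‖r‖ ^ 2 := by
      have h2 := quad_le_lamMax_mul_norm_sq hm hGk.isHermitian r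
      have h3 : ⟪r, Matrix.toEuclideanLin G r⟫ = ‖Matrix.toEuclideanLin (H θk)ᵀ r‖ ^ 2 := by
        rw [hGdef, inner_gram]
      rwa [h3] at h2
    calc ρ * ‖Matrix.toEuclideanLin (H θk)ᵀ r‖ ^ 2 ≤ ρ * (lamMax G * ‖r‖ ^ 2) :=
          mul_le_mul_of_nonneg_left h1 hρ
      _ = ρ * lamMax G * ‖r‖ ^ 2 := by ring
  -- THE CALCULUS PART
  have hsplit : ∃ E : EuclideanSpace ℝ (Fin m),
      f θk1 - y = (r + Matrix.toEuclideanLin (H θk) Δ) + E ∧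
      ‖E‖ ≤ 2 * (C/3) * slam0 * ‖Δ‖ := by
    set γ : ℝ → EuclideanSpace ℝ (Fin n) := fun t => θk + t • Δ with hγdef
    have hγ0 : γ 0 = θk := by simp [hγdef]
    have hγ1 : γ 1 = θk1 := by simp [hγdef, hΔdef]
    have hγcont : Continuous γ := by
      apply continuous_const.add (continuous_id.smul continuous_const)
    have hHΔ : ∀ θ, Matrix.toEuclideanLin (H θ) Δ = (fderiv ℝ f θ) Δ := fun θ => by
      have h9 := LinearMap.congr_fun (hH θ) Δ
      simpa using h9
    have hder : ∀ t : ℝ, HasDerivAt (fun t => f (γ t)) ((fderiv ℝ f (γ t)) Δ) t := by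
      intro t
      have h1 : HasDerivAt γ Δ t := by
        have h2 : HasDerivAt (fun t : ℝ => t • Δ) Δ t := by
          simpa using (hasDerivAt_id t).smul_const Δ
        simpa [hγdef] using h2.const_add θk
      exact ((hf.differentiable one_ne_zero) (γ t)).hasFDerivAt.comp_hasDerivAt t h1
    have hcont : Continuous fun t => (fderiv ℝ f (γ t)) Δ := by
      exact ((hf.continuous_fderiv one_ne_zero).comp hγcont).clm_apply continuous_const
    have hFTC : ∫ t in (0:ℝ)..1, (fderiv ℝ f (γ t)) Δ = f θk1 - f θk := by
      have h3 := intervalIntegral.integral_eq_sub_of_hasDerivAt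
        (f := fun t => f (γ t)) (f' := fun t => (fderiv ℝ f (γ t)) Δ)
        (fun t _ => hder t) (hcont.intervalIntegrable 0 1)
      rw [h3]; simp only [hγ0, hγ1]
    refine ⟨∫ t in (0:ℝ)..1, ((fderiv ℝ f (γ t)) Δ - (fderiv ℝ f θk) Δ), ?_, ?_⟩
    · have h4 : ∫ t in (0:ℝ)..1, ((fderiv ℝ f (γ t)) Δ - (fderiv ℝ f θk) Δ)
          = (∫ t in (0:ℝ)..1, (fderiv ℝ f (γ t)) Δ) - ∫ t in (0:ℝ)..1, (fderiv ℝ f θk) Δ :=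
        intervalIntegral.integral_sub (hcont.intervalIntegrable 0 1)
          (continuous_const.intervalIntegrable 0 1)
      have h5 : ∫ t in (0:ℝ)..1, (fderiv ℝ f θk) Δ = (fderiv ℝ f θk) Δ := by simp
      rw [h4, h5, hFTC, hrdef, hHΔ θk]
      abel
    · have hball : ∀ t ∈ Set.uIoc (0:ℝ) 1, ‖γ t - θ₀‖ ≤ 3 * ‖y - f θ₀‖ / slam0 := by
        intro t ht
        rw [Set.uIoc_of_le (by norm_num : (0:ℝ) ≤ 1)] at ht
        obtain ⟨ht0, ht1⟩ := ht
        have hconv : γ t - θ₀ = (1 - t) • (θk - θ₀) + t • (θk1 - θ₀) := by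
          rw [hγdef]; simp only; rw [hΔdef]; module
        rw [hconv]
        calc ‖(1 - t) • (θk - θ₀) + t • (θk1 - θ₀)‖
            ≤ ‖(1 - t) • (θk - θ₀)‖ + ‖t • (θk1 - θ₀)‖ := norm_add_le _ _
          _ = (1 - t) * ‖θk - θ₀‖ + t * ‖θk1 - θ₀‖ := by
              rw [norm_smul, norm_smul, Real.norm_of_nonneg (by linarith),
                Real.norm_of_nonneg (by linarith)]
          _ ≤ (1 - t) * (3 * ‖y - f θ₀‖ / slam0) + t * (3 * ‖y - f θ₀‖ / slam0) := by
              apply add_le_add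
              · exact mul_le_mul_of_nonneg_left hθk (by linarith)
              · exact mul_le_mul_of_nonneg_left hθk1 ht0.le
          _ = 3 * ‖y - f θ₀‖ / slam0 := by ring
      have hbd : ∀ t ∈ Set.uIoc (0:ℝ) 1,
          ‖(fderiv ℝ f (γ t)) Δ - (fderiv ℝ f θk) Δ‖ ≤ 2 * (C/3) * slam0 * ‖Δ‖ := by
        intro t ht
        have h6 : (fderiv ℝ f (γ t)) Δ - (fderiv ℝ f θk) Δ
            = Matrix.toEuclideanLin (H (γ t) - H θk) Δ := by
          rw [← hHΔ (γ t), ← hHΔ θk, map_sub, LinearMap.sub_apply]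
        rw [h6]
        calc ‖Matrix.toEuclideanLin (H (γ t) - H θk) Δ‖ ≤ ‖H (γ t) - H θk‖ * ‖Δ‖ :=
              norm_toEuclideanLin_apply_le _ Δ
          _ ≤ 2 * (C/3) * slam0 * ‖Δ‖ := by
              apply mul_le_mul_of_nonneg_right _ (norm_nonneg Δ)
              calc ‖H (γ t) - H θk‖ ≤ ‖H (γ t) - H θ₀‖ + ‖H θ₀ - H θk‖ :=
                    norm_sub_le_norm_sub_add_norm_sub _ _ _
                _ ≤ C / 3 * slam0 + C / 3 * slam0 := by
                    apply add_le_add (hstable (γ t) (hball t ht))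
                    rw [norm_sub_rev]
                    exact hstable θk hθk
                _ = 2 * (C/3) * slam0 := by ring
      have h7 := intervalIntegral.norm_integral_le_of_norm_le_const hbd
      simpa using h7
  obtain ⟨E, hE1, hE2⟩ := hsplit
  -- algebra: r + Hk Δ = s • u
  have halg : r + Matrix.toEuclideanLin (H θk) Δ = s • u := by
    have hid : G * M⁻¹ + s • M⁻¹ = 1 := by
      have h1 : (G + s • (1 : Matrix (Fin m) (Fin m) ℝ)) * M⁻¹ = 1 := by
        rw [← hMdef]; exact hMinv
      rwa [Matrix.add_mul, Matrix.smul_mul, Matrix.one_mul] at h1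
    have h2 : Matrix.toEuclideanLin (H θk) Δ = -(Matrix.toEuclideanLin (G * M⁻¹) r) := by
      rw [hΔ, map_neg, hudef, ← toEuclideanLin_mul_apply, ← toEuclideanLin_mul_apply,
        ← hGdef]
    have h3 : r = Matrix.toEuclideanLin (G * M⁻¹) r + s • Matrix.toEuclideanLin M⁻¹ r := by
      conv_lhs => rw [← toEuclideanLin_one_apply r, ← hid]
      rw [map_add, LinearMap.add_apply, _root_.map_smul, LinearMap.smul_apply]
    rw [h2, hudef]
    nth_rewrite 1 [h3]
    abel
  -- final estimate
  have hmain : ‖f θk1 - y‖ ≤ s * ‖u‖ + ‖E‖ := by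
    rw [hE1, halg]
    calc ‖s • u + E‖ ≤ ‖s • u‖ + ‖E‖ := norm_add_le _ _
      _ = s * ‖u‖ + ‖E‖ := by rw [norm_smul, Real.norm_of_nonneg hs0]
  have hsu : s * ‖u‖ ≤ ρ * (lamMax G / lamMin G) * ‖r‖ ^ 2 * ‖r‖ := by
    have h1 : s * ‖u‖ ≤ s * (‖r‖ / lamMin M) :=
      mul_le_mul_of_nonneg_left hunorm hs0
    have h2 : s * (‖r‖ / lamMin M) ≤ s * (‖r‖ / lamMin G) := by
      apply mul_le_mul_of_nonneg_left _ hs0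
      apply div_le_div_of_nonneg_left (norm_nonneg r) hlamG hlamM
    have h3 : s * (‖r‖ / lamMin G) ≤ (ρ * lamMax G * ‖r‖ ^ 2) * (‖r‖ / lamMin G) := by
      apply mul_le_mul_of_nonneg_right hsbound
      positivity
    calc s * ‖u‖ ≤ s * (‖r‖ / lamMin M) := h1
      _ ≤ s * (‖r‖ / lamMin G) := h2
      _ ≤ (ρ * lamMax G * ‖r‖ ^ 2) * (‖r‖ / lamMin G) := h3
      _ = ρ * (lamMax G / lamMin G) * ‖r‖ ^ 2 * ‖r‖ := by field_simp
  have hEr : ‖E‖ ≤ 2 * C / (3 - C) * ‖r‖ := by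
    have h3C : (0:ℝ) < 3 - C := by linarith
    have h1 : 2 * (C/3) * slam0 * ‖Δ‖ ≤ 2 * C / (3 - C) * ‖r‖ := by
      rcases eq_or_lt_of_le hC0 with h | h
      · rw [← h]; simp [norm_nonneg]
      · have hΔle : ‖Δ‖ ≤ ‖r‖ / ((1 - C/3) * slam0) := by
          rw [le_div_iff₀ hb]; linarith [hΔnorm]
        calc 2 * (C/3) * slam0 * ‖Δ‖ ≤ 2 * (C/3) * slam0 * (‖r‖ / ((1 - C/3) * slam0)) := by
              apply mul_le_mul_of_nonneg_left hΔle; positivity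
          _ = 2 * C / (3 - C) * ‖r‖ := by field_simp
    linarith [hE2]
  -- conclude
  have hκ : 0 ≤ ρ * (lamMax G / lamMin G) * ‖r‖ ^ 2 * ‖r‖ := by positivity
  have hgoal : (1 + C) * ((2 + C) / (1 + C) +
      ρ * (lamMax G / lamMin G) * ‖r‖ ^ 2) * ‖r‖
      = (2 + C) * ‖r‖ + (1 + C) * (ρ * (lamMax G / lamMin G) * ‖r‖ ^ 2 * ‖r‖) := by
    field_simp
  rw [hgoal]
  have hC3 : 2 * C / (3 - C) * ‖r‖ ≤ (2 + C) * ‖r‖ := by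
    apply mul_le_mul_of_nonneg_right _ (norm_nonneg r)
    rw [div_le_iff₀ (by linarith : (0:ℝ) < 3 - C)]
    nlinarith
  nlinarith [hmain, hsu, hEr, hC3, hκ]
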